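/- Every L-dappled tiling of G_{m,n} with T = {0,1} and L = {H^p_0, V^q_1} (p, q ≥ 2) gives rise to a valid brick Wang tiling: given an L-dappled f, there exists τ : G_{m,n} → W such that τ(i,j)_1 = τ(i-1,j)_3 and τ(i,j)_2 = τ(i,j-1)_4 for all interior adjacencies, and τ(i,j) ∈ W_0 (i.e., c_1 = c_3) iff f(i,j) = 0; consequently τ has no horizontal run of more than p tiles from W_0 and no vertical run of more than q tiles from W_1. -/
import Mathlib


/-- `w = (c₁,c₂,c₃,c₄)` is a brick Wang tile:
`(c₁ = c₃ ∧ c₂ ≠ c₄) ∨ (c₁ ≠ c₃ ∧ c₂ = c₄)`. -/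
def isW {C : Type*} (w : C × C × C × C) : Prop :=
  (w.1 = w.2.2.1 ∧ w.2.1 ≠ w.2.2.2) ∨ (w.1 ≠ w.2.2.1 ∧ w.2.1 = w.2.2.2)

lemma parity_eq_iff {C : Type*} {c0 c1 : C} (hC : c0 ≠ c1) (a b : ℕ) :
    (if a % 2 = 0 then c0 else c1) = (if b % 2 = 0 then c0 else c1) ↔ a % 2 = b % 2 := by
  rcases Nat.even_or_odd a with ha | ha <;> rcases Nat.even_or_odd b with hb | hb <;>
    simp [Nat.even_iff, Nat.odd_iff] at ha hb <;>
    simp [ha, hb, hC, hC.symm] <;> omega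

lemma fin2_cases (x : Fin 2) : x = 0 ∨ x = 1 := by omega

/-- Every `L`-dappled tiling with `L = {H^p_0, V^q_1}` gives rise to a valid
brick Wang tiling `τ` with `τ(i,j) ∈ W₀ ↔ f(i,j) = 0`; consequently `τ` has no
horizontal run of more than `p` tiles from `W₀` and no vertical run of more
than `q` tiles from `W₁`. -/
theorem stmt10 {C : Type*} (c0 c1 : C) (hC : c0 ≠ c1)
    (m n : ℕ) (p q : ℕ) (hp : 2 ≤ p) (hq : 2 ≤ q)
    (f : ℕ → ℕ → Fin 2)
    (hH : ∀ i < m, ∀ j < n, ¬(p ≤ i ∧ ∀ s ≤ p, f (i-s) j = 0))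
    (hV : ∀ i < m, ∀ j < n, ¬(q ≤ j ∧ ∀ s ≤ q, f i (j-s) = 1)) :
    ∃ τ : ℕ → ℕ → C × C × C × C,
      (∀ i < m, ∀ j < n, isW (τ i j)) ∧
      (∀ i j, 1 ≤ i → i < m → j < n → (τ i j).1 = (τ (i-1) j).2.2.1) ∧
      (∀ i j, 1 ≤ j → i < m → j < n → (τ i j).2.1 = (τ i (j-1)).2.2.2) ∧
      (∀ i < m, ∀ j < n, ((τ i j).1 = (τ i j).2.2.1 ↔ f i j = 0)) ∧
      (∀ i < m, ∀ j < n, ¬(p ≤ i ∧ ∀ s ≤ p, (τ (i-s) j).1 = (τ (i-s) j).2.2.1)) ∧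
      (∀ i < m, ∀ j < n, ¬(q ≤ j ∧ ∀ s ≤ q, (τ i (j-s)).2.1 = (τ i (j-s)).2.2.2)) := by
  -- vertical edge coloring: parity of number of 1's below
  set A : ℕ → ℕ → C := fun i j =>
    if ((Finset.range i).sum fun k => (f k j).val) % 2 = 0 then c0 else c1 with hA
  -- horizontal edge coloring: parity of number of 0's to the left
  set B : ℕ → ℕ → C := fun i j =>
    if ((Finset.range j).sum fun k => 1 - (f i k).val) % 2 = 0 then c0 else c1 with hB
  have hAeq : ∀ i j, A (i + 1) j = A i j ↔ f i j = 0 := by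
    intro i j
    rw [hA]
    simp only
    rw [parity_eq_iff hC, Finset.sum_range_succ]
    rcases fin2_cases (f i j) with h | h <;> simp [h] <;> omega
  have hBeq : ∀ i j, B i (j + 1) = B i j ↔ f i j = 1 := by
    intro i j
    rw [hB]
    simp only
    rw [parity_eq_iff hC, Finset.sum_range_succ]
    rcases fin2_cases (f i j) with h | h <;> simp [h] <;> omega
  refine ⟨fun i j => (A i j, B i j, A (i + 1) j, B i (j + 1)), ?_, ?_, ?_, ?_, ?_, ?_⟩
  · intro i _ j _
    rcases fin2_cases (f i j) with h | h
    · exact Or.inl ⟨((hAeq i j).mpr h).symm, fun hc => by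
        have := (hBeq i j).mp hc.symm; rw [this] at h; exact absurd h (by simp)⟩
    · exact Or.inr ⟨fun hc => by
        have := (hAeq i j).mp hc.symm; rw [this] at h; exact absurd h (by simp),
        ((hBeq i j).mpr h).symm⟩
  · intro i j hi _ _
    simp only
    congr 1
    omega
  · intro i j hj _ _
    simp only
    congr 1
    omega
  · intro i _ j _
    exact ⟨fun hc => (hAeq i j).mp hc.symm, fun h => ((hAeq i j).mpr h).symm⟩
  · intro i him j hjn ⟨hpi, hall⟩
    exact hH i him j hjn ⟨hpi, fun s hs => (hAeq (i - s) j).mp (hall s hs).symm⟩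
  · intro i him j hjn ⟨hqj, hall⟩
    exact hV i him j hjn ⟨hqj, fun s hs => (hBeq i (j - s)).mp (hall s hs).symm⟩
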